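/- Let d ≥ 1 and let q : ℝ → ℝ^d be continuous with summatory parameter q(t) := q_1(t) + ⋯ + q_d(t). Define the vector-valued function x(t) := exp(−∫₀ᵗ q(ρ)dρ) · ∫₀ᵗ q(τ)·exp(∫₀^τ q(σ)dσ) dτ for t ≥ 0, and set M(t) := (1 − x(t))·I + C_{x(t)}, where x(t) := x_1(t) + ⋯ + x_d(t). Then M(0) = I and, for every t ≥ 0, M is differentiable at t with M′(t) = M(t)·Q_{q(t)}; that is, M(t) = M_{x(t)} solves the Cauchy problem M′ = M·Q_{q(·)}, M(0) = I. -/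

import Mathlib

open Matrix

/-- `eqRows d x` is the `d × d` real matrix all of whose rows equal the row vector `x`. -/
def eqRows (d : ℕ) (x : Fin d → ℝ) : Matrix (Fin d) (Fin d) ℝ :=
  Matrix.of fun _ j => x j

/-- The equal-input generator `Q_x := −x·I + C_x`, where `x = ∑ᵢ xᵢ`. -/
noncomputable def Qgen (d : ℕ) (x : Fin d → ℝ) : Matrix (Fin d) (Fin d) ℝ :=
  (-(∑ i, x i)) • (1 : Matrix (Fin d) (Fin d) ℝ) + eqRows d x

/-- The solution vector
`x(t) = exp(−∫₀ᵗ q(ρ)dρ) · ∫₀ᵗ q(τ)·exp(∫₀^τ q(σ)dσ) dτ`, where `q(t) = ∑ᵢ qᵢ(t)`. -/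
noncomputable def xsol (d : ℕ) (q : ℝ → Fin d → ℝ) (t : ℝ) : Fin d → ℝ :=
  Real.exp (-∫ ρ in (0:ℝ)..t, ∑ i, q ρ i) •
    ∫ τ in (0:ℝ)..t, Real.exp (∫ σ in (0:ℝ)..τ, ∑ i, q σ i) • q τ

/-- The equal-input matrix `M_{x(t)} = (1 − x(t))·I + C_{x(t)}`. -/
noncomputable def Msol (d : ℕ) (q : ℝ → Fin d → ℝ) (t : ℝ) : Matrix (Fin d) (Fin d) ℝ :=
  (1 - ∑ i, xsol d q t i) • (1 : Matrix (Fin d) (Fin d) ℝ) + eqRows d (xsol d q t)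

/-- for continuous `q`, the matrix family `M(t) := M_{x(t)}` with the explicit
vector `x(t)` above satisfies `M(0) = I` and the Kolmogorov forward equation
`M′(t) = M(t)·Q_{q(t)}` (entrywise derivative) for all `t ≥ 0`. -/
theorem stmt8 (d : ℕ) (hd : 1 ≤ d) (q : ℝ → Fin d → ℝ) (hq : Continuous q) :
    Msol d q 0 = 1 ∧
    ∀ t, 0 ≤ t → ∀ i j,
      HasDerivAt (fun s => Msol d q s i j) ((Msol d q t * Qgen d (q t)) i j) t := by
  have hQc : Continuous (fun s => ∑ i, q s i) :=
    continuous_finset_sum _ fun i _ => (continuous_apply i).comp hq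
  set Qb : ℝ → ℝ := fun s => ∑ i, q s i with hQb
  set a : ℝ → ℝ := fun t => ∫ ρ in (0:ℝ)..t, Qb ρ with ha
  have haD : ∀ t, HasDerivAt a (Qb t) t := fun t =>
    intervalIntegral.integral_hasDerivAt_right (hQc.intervalIntegrable _ _)
      (hQc.stronglyMeasurableAtFilter _ _) hQc.continuousAt
  have hac : Continuous a := by
    rw [continuous_iff_continuousAt]; exact fun t => (haD t).continuousAt
  have hgc : Continuous (fun τ => Real.exp (a τ) • q τ) :=
    (Real.continuous_exp.comp hac).smul hq
  set v : ℝ → Fin d → ℝ := fun t => ∫ τ in (0:ℝ)..t, Real.exp (a τ) • q τ with hv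
  have hvD : ∀ t, HasDerivAt v (Real.exp (a t) • q t) t := fun t =>
    intervalIntegral.integral_hasDerivAt_right (hgc.intervalIntegrable _ _)
      (hgc.stronglyMeasurableAtFilter _ _) hgc.continuousAt
  have hxeq : ∀ t, xsol d q t = Real.exp (-(a t)) • v t := fun t => rfl
  have hxD : ∀ t, HasDerivAt (fun s => xsol d q s) (q t + (-(Qb t)) • xsol d q t) t := by
    intro t
    have h1 : HasDerivAt (fun s => Real.exp (-(a s))) (Real.exp (-(a t)) * (-(Qb t))) t :=
      (haD t).neg.exp
    have := h1.smul (hvD t)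
    have heq : Real.exp (-(a t)) • (Real.exp (a t) • q t)
        + (Real.exp (-(a t)) * (-(Qb t))) • v t
        = q t + (-(Qb t)) • xsol d q t := by
      rw [smul_smul, ← Real.exp_add, neg_add_cancel, Real.exp_zero, one_smul, hxeq,
        smul_smul]
      ring_nf
    rw [heq] at this
    exact this
  have hxjD : ∀ t j, HasDerivAt (fun s => xsol d q s j)
      (q t j + (-(Qb t)) * xsol d q t j) t := fun t j => hasDerivAt_pi.1 (hxD t) j
  have hXD : ∀ t, HasDerivAt (fun s => ∑ i, xsol d q s i)
      (Qb t + (-(Qb t)) * ∑ i, xsol d q t i) t := by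
    intro t
    have h2 : HasDerivAt (fun s => ∑ i, xsol d q s i)
        (∑ i, (q t i + (-(Qb t)) * xsol d q t i)) t :=
      HasDerivAt.fun_sum (fun i _ => hxjD t i)
    convert h2 using 1
    rw [Finset.sum_add_distrib, ← Finset.mul_sum]
  constructor
  · have hx0 : xsol d q 0 = 0 := by
      simp [xsol]
    ext i j
    simp [Msol, eqRows, hx0, Matrix.add_apply]
  · intro t _ i j
    have hM : ∀ s, Msol d q s i j =
        (1 - ∑ k, xsol d q s k) * (1 : Matrix (Fin d) (Fin d) ℝ) i j + xsol d q s j := by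
      intro s; simp [Msol, eqRows, Matrix.add_apply, Matrix.smul_apply, smul_eq_mul]
    have key : HasDerivAt (fun s => (1 - ∑ k, xsol d q s k) *
        (1 : Matrix (Fin d) (Fin d) ℝ) i j + xsol d q s j)
        ((-(Qb t + (-(Qb t)) * ∑ k, xsol d q t k)) * (1 : Matrix (Fin d) (Fin d) ℝ) i j
          + (q t j + (-(Qb t)) * xsol d q t j)) t :=
      (((hXD t).const_sub 1).mul_const _).add (hxjD t j)
    have hfun : (fun s => Msol d q s i j) = fun s =>
        (1 - ∑ k, xsol d q s k) * (1 : Matrix (Fin d) (Fin d) ℝ) i j + xsol d q s j :=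
      funext hM
    rw [hfun]
    have hrow : ∑ k, Msol d q t i k = 1 := by
      simp only [Msol, eqRows, Matrix.add_apply, Matrix.smul_apply, smul_eq_mul,
        Matrix.of_apply, Matrix.one_apply]
      rw [Finset.sum_add_distrib, ← Finset.mul_sum]
      simp
    have hmulC : (Msol d q t * eqRows d (q t)) i j = q t j := by
      simp only [Matrix.mul_apply, eqRows, Matrix.of_apply, ← Finset.sum_mul, hrow, one_mul]
    have hval : (Msol d q t * Qgen d (q t)) i j =
        (-(Qb t + (-(Qb t)) * ∑ k, xsol d q t k)) * (1 : Matrix (Fin d) (Fin d) ℝ) i j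
          + (q t j + (-(Qb t)) * xsol d q t j) := by
      have : Msol d q t * Qgen d (q t)
          = (-(Qb t)) • Msol d q t + Msol d q t * eqRows d (q t) := by
        rw [Qgen, Matrix.mul_add, Matrix.mul_smul, Matrix.mul_one]
      rw [this]
      simp only [Matrix.add_apply, Matrix.smul_apply, smul_eq_mul, hmulC]
      rw [hM t]
      ring
    rw [hval]
    exact key
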